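/- Let G be a finite group acting 2-transitively on a finite set Ω, and let ψ be the irreducible complex character of G such that 1 + ψ is the permutation character of the action (ψ(g) = fix(g) − 1). Let L be a (G,Ω)-Cameron–Liebler set with parameter x, and let X ⊆ L and Y ⊆ G \ L be sets of equal size. Then L̄ := (L \ X) ∪ Y is a (G,Ω)-Cameron–Liebler set of parameter x if and only if for all g ∈ G, ψ(X g⁻¹) − ψ(Y g⁻¹) = (δ_X(g) − δ_Y(g)) · |G|/ψ(1), where δ_S(g) = 1 if g ∈ S and 0 otherwise. -/

import Mathlib

open scoped Pointwise Classical

/-- The indicator vector (in `ℂ^G`) of a subset of `G`. -/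
noncomputable def indicatorVec {G : Type*} (S : Set G) : G → ℂ :=
  Set.indicator S fun _ => (1 : ℂ)

/-- A subset `L ⊆ G` is a `(G,Ω)`-Cameron–Liebler set if its indicator vector lies in the
`ℂ`-linear span of the indicator vectors of the stars `G_{a→b} = {g : G | g • a = b}`. -/
def IsCLSet (G : Type*) [Group G] (Ω : Type*) [MulAction G Ω] (L : Set G) : Prop :=
  indicatorVec L ∈
    Submodule.span ℂ {f : G → ℂ | ∃ a b : Ω, f = indicatorVec {g : G | g • a = b}}

/-- For a 2-transitive action, `ψ(g) = fix(g) − 1` is the irreducible character with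
`1 + ψ` the permutation character. -/
noncomputable def psiChar (G : Type*) [Group G] (Ω : Type*) [Fintype Ω] [MulAction G Ω]
    (g : G) : ℂ :=
  (Nat.card {α : Ω | g • α = α} : ℂ) - 1

section Aux
open Finset
set_option linter.unusedSectionVars false
variable {G : Type*} [Group G] [Fintype G] {Ω : Type*} [Fintype Ω] [MulAction G Ω]

lemma psiChar_eq (g : G) :
    psiChar G Ω g = ((univ.filter fun α : Ω => g • α = α).card : ℂ) - 1 := by
  unfold psiChar
  congr 2
  rw [Nat.card_coe_set_eq, Set.ncard_eq_toFinset_card']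
  congr 1
  ext α
  simp

lemma psiChar_expand (s g : G) :
    psiChar G Ω (s * g⁻¹) = (∑ a : Ω, if s • a = g • a then (1:ℂ) else 0) - 1 := by
  rw [psiChar_eq]
  congr 1
  rw [Finset.card_filter]
  push_cast
  rw [← Equiv.sum_comp (MulAction.toPerm g) (fun α => if (s * g⁻¹) • α = α then (1:ℂ) else 0)]
  apply Finset.sum_congr rfl
  intro a _
  congr 1
  simp [MulAction.toPerm_apply, mul_smul, inv_smul_smul]

lemma star_card_eq (htrans : ∀ b b' : Ω, ∃ g : G, g • b = b') (a b b' : Ω) :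
    (univ.filter fun s : G => s • a = b).card = (univ.filter fun s : G => s • a = b').card := by
  obtain ⟨g₀, hg₀⟩ := htrans b b'
  apply Finset.card_bij' (fun s _ => g₀ * s) (fun t _ => g₀⁻¹ * t)
  · intro s hs
    simp only [mem_filter, mem_univ, true_and] at hs ⊢
    rw [mul_smul, hs, hg₀]
  · intro t ht
    simp only [mem_filter, mem_univ, true_and] at ht ⊢
    rw [mul_smul, ht, ← hg₀, inv_smul_smul]
  · intro s _; group
  · intro t _; group

lemma star_card_mul (htrans : ∀ b b' : Ω, ∃ g : G, g • b = b') (a b : Ω) :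
    (univ.filter fun s : G => s • a = b).card * Fintype.card Ω = Fintype.card G := by
  have h := Finset.card_eq_sum_card_fiberwise
    (s := (univ : Finset G)) (t := (univ : Finset Ω)) (f := fun s => s • a) (by simp)
  rw [← Finset.card_univ (α := G), h,
    Finset.sum_congr rfl (fun b' _ => (star_card_eq htrans a b' b)), Finset.sum_const,
    smul_eq_mul, Finset.card_univ, mul_comm]

lemma dstar_card_eq (h2trans : ∀ a b c d : Ω, a ≠ b → c ≠ d → ∃ g : G, g • a = c ∧ g • b = d)
    (a b c d c' d' : Ω) (hcd : c ≠ d) (hcd' : c' ≠ d') :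
    (univ.filter fun s : G => s • a = c ∧ s • b = d).card
      = (univ.filter fun s : G => s • a = c' ∧ s • b = d').card := by
  obtain ⟨g₀, h1, h2⟩ := h2trans c d c' d' hcd hcd'
  apply Finset.card_bij' (fun s _ => g₀ * s) (fun t _ => g₀⁻¹ * t)
  · intro s hs
    simp only [mem_filter, mem_univ, true_and] at hs ⊢
    rw [mul_smul, mul_smul, hs.1, hs.2, h1, h2]; exact ⟨rfl, rfl⟩
  · intro t ht
    simp only [mem_filter, mem_univ, true_and] at ht ⊢
    rw [mul_smul, mul_smul, ht.1, ht.2, ← h1, ← h2, inv_smul_smul, inv_smul_smul]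
    exact ⟨rfl, rfl⟩
  · intro s _; group
  · intro t _; group

lemma dstar_card_mul (h2trans : ∀ a b c d : Ω, a ≠ b → c ≠ d → ∃ g : G, g • a = c ∧ g • b = d)
    (a b c d : Ω) (hab : a ≠ b) (hcd : c ≠ d) :
    (univ.filter fun s : G => s • a = c ∧ s • b = d).card *
      (Fintype.card Ω * Fintype.card Ω - Fintype.card Ω) = Fintype.card G := by
  have h := Finset.card_eq_sum_card_fiberwise
    (s := (univ : Finset G)) (t := (univ.offDiag : Finset (Ω × Ω)))
    (f := fun s => (s • a, s • b)) ?_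
  · rw [← Finset.card_univ (α := G), h]
    have : ∀ p ∈ (univ.offDiag : Finset (Ω × Ω)),
        (univ.filter fun s : G => (s • a, s • b) = p).card
          = (univ.filter fun s : G => s • a = c ∧ s • b = d).card := by
      intro p hp
      rw [Finset.mem_offDiag] at hp
      have := dstar_card_eq h2trans a b p.1 p.2 c d hp.2.2 hcd
      rw [← this]
      congr 1
      ext s
      simp [Prod.ext_iff]
    rw [Finset.sum_congr rfl this, Finset.sum_const, smul_eq_mul, Finset.offDiag_card,
      Finset.card_univ, mul_comm]
  · intro s _
    rw [Finset.mem_coe, Finset.mem_offDiag]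
    refine ⟨mem_univ _, mem_univ _, fun h => hab ?_⟩
    exact MulAction.injective s (by simpa using h)

lemma ind_sum (a b : Ω) :
    ∑ s : G, indicatorVec {t : G | t • a = b} s
      = ((univ.filter fun s : G => s • a = b).card : ℂ) := by
  rw [Finset.card_filter]
  push_cast
  apply Finset.sum_congr rfl
  intro s _
  simp [indicatorVec, Set.indicator_apply]

lemma gen_sum (a b : Ω) (g : G) :
    ∑ s : G, indicatorVec {t : G | t • a = b} s * psiChar G Ω (s * g⁻¹)
      = (∑ α : Ω, ((univ.filter fun s : G => s • a = b ∧ s • α = g • α).card : ℂ))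
        - ((univ.filter fun s : G => s • a = b).card : ℂ) := by
  have h1 : ∀ s : G, indicatorVec {t : G | t • a = b} s * psiChar G Ω (s * g⁻¹)
      = (∑ α : Ω, if s • a = b ∧ s • α = g • α then (1:ℂ) else 0)
        - indicatorVec {t : G | t • a = b} s := by
    intro s
    rw [psiChar_expand, mul_sub, mul_one, Finset.mul_sum]
    congr 1
    apply Finset.sum_congr rfl
    intro α _
    by_cases h1 : s • a = b <;> by_cases h2 : s • α = g • α <;>
      simp [indicatorVec, Set.indicator_apply, h1, h2]
  rw [Finset.sum_congr rfl (fun s _ => h1 s), Finset.sum_sub_distrib, ind_sum,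
    Finset.sum_comm]
  congr 1
  apply Finset.sum_congr rfl
  intro α _
  rw [Finset.card_filter]
  push_cast
  rfl

lemma gen_identity (hn : 2 ≤ Fintype.card Ω)
    (h2trans : ∀ a b c d : Ω, a ≠ b → c ≠ d → ∃ g : G, g • a = c ∧ g • b = d)
    (a b : Ω) (g : G) :
    ∑ s : G, indicatorVec {t : G | t • a = b} s * psiChar G Ω (s * g⁻¹)
      = (Fintype.card G : ℂ) / ((Fintype.card Ω : ℂ) - 1) * indicatorVec {t : G | t • a = b} g
        - (Fintype.card G : ℂ) / ((Fintype.card Ω : ℂ) - 1) / (Fintype.card G : ℂ)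
          * ∑ s : G, indicatorVec {t : G | t • a = b} s := by
  have htrans : ∀ b b' : Ω, ∃ g : G, g • b = b' := by
    intro b b'
    have : Nontrivial Ω := Fintype.one_lt_card_iff_nontrivial.mp hn
    obtain ⟨d, hd⟩ := exists_ne b
    obtain ⟨d', hd'⟩ := exists_ne b'
    obtain ⟨g, hg, _⟩ := h2trans b d b' d' (Ne.symm hd) (Ne.symm hd')
    exact ⟨g, hg⟩
  set n := Fintype.card Ω with hnn
  have hNne : ((n:ℂ)) ≠ 0 := Nat.cast_ne_zero.mpr (by omega)
  have hN1 : ((n:ℂ)) - 1 ≠ 0 := sub_ne_zero.mpr (by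
    intro h
    have : n = 1 := by exact_mod_cast h
    omega)
  have hM : ((Fintype.card G : ℂ)) ≠ 0 := Nat.cast_ne_zero.mpr Fintype.card_ne_zero
  have hNN : (n:ℂ) * (n:ℂ) - (n:ℂ) ≠ 0 := by
    have h : (n:ℂ) * (n:ℂ) - (n:ℂ) = (n:ℂ) * ((n:ℂ) - 1) := by ring
    rw [h]; exact mul_ne_zero hNne hN1
  have hk1C : ((univ.filter fun s : G => s • a = b).card : ℂ)
      = (Fintype.card G : ℂ) / (n:ℂ) := by
    rw [eq_div_iff hNne]
    exact_mod_cast congrArg (Nat.cast : ℕ → ℂ) (star_card_mul htrans a b)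
  have hD : ∀ α : Ω, α ≠ a → g • α ≠ b →
      ((univ.filter fun s : G => s • a = b ∧ s • α = g • α).card : ℂ)
        = (Fintype.card G : ℂ) / ((n:ℂ) * (n:ℂ) - (n:ℂ)) := by
    intro α hα hgα
    have hle : n ≤ n * n := Nat.le_mul_of_pos_left n (by omega)
    have h := congrArg (Nat.cast : ℕ → ℂ)
      (dstar_card_mul h2trans a α b (g • α) (Ne.symm hα) (fun h => hgα h.symm))
    push_cast [Nat.cast_sub (show Fintype.card Ω ≤ Fintype.card Ω * Fintype.card Ω from hle)] at h
    rw [eq_div_iff hNN]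
    exact h
  rw [gen_sum, ind_sum, hk1C]
  by_cases hg : g • a = b
  · have hind : indicatorVec {t : G | t • a = b} g = 1 := by
      simp [indicatorVec, Set.indicator_apply, hg]
    rw [hind, ← Finset.add_sum_erase univ _ (mem_univ a)]
    have ha : (univ.filter fun s : G => s • a = b ∧ s • a = g • a)
        = (univ.filter fun s : G => s • a = b) := by
      apply Finset.filter_congr
      intro s _
      rw [hg]; tauto
    have herase : ∀ α ∈ univ.erase a,
        ((univ.filter fun s : G => s • a = b ∧ s • α = g • α).card : ℂ)
          = (Fintype.card G : ℂ) / ((n:ℂ) * (n:ℂ) - (n:ℂ)) := by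
      intro α hα
      refine hD α (Finset.mem_erase.mp hα).1 (fun h => (Finset.mem_erase.mp hα).1 ?_)
      exact MulAction.injective g (h.trans hg.symm)
    rw [ha, hk1C, Finset.sum_congr rfl herase, Finset.sum_const,
      Finset.card_erase_of_mem (mem_univ a), Finset.card_univ, nsmul_eq_mul,
      Nat.cast_sub (by omega : 1 ≤ n)]
    push_cast
    field_simp
    ring
  · have hind : indicatorVec {t : G | t • a = b} g = 0 := by
      simp [indicatorVec, Set.indicator_apply, hg]
    set α₀ := g⁻¹ • b with hα₀
    have hgα₀ : g • α₀ = b := smul_inv_smul g b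
    have hα₀a : α₀ ≠ a := fun h => hg (by rw [← h]; exact hgα₀)
    rw [hind, ← Finset.add_sum_erase univ _ (mem_univ a),
      ← Finset.add_sum_erase (univ.erase a) _
        (Finset.mem_erase.mpr ⟨hα₀a, mem_univ α₀⟩)]
    have ha : (univ.filter fun s : G => s • a = b ∧ s • a = g • a) = ∅ := by
      apply Finset.filter_false_of_mem
      rintro s _ ⟨h1, h2⟩
      exact hg (h2 ▸ h1)
    have hA : (univ.filter fun s : G => s • a = b ∧ s • α₀ = g • α₀) = ∅ := by
      apply Finset.filter_false_of_mem
      rintro s _ ⟨h1, h2⟩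
      rw [hgα₀] at h2
      exact hα₀a (MulAction.injective s (h1.trans h2.symm)).symm
    have herase : ∀ α ∈ (univ.erase a).erase α₀,
        ((univ.filter fun s : G => s • a = b ∧ s • α = g • α).card : ℂ)
          = (Fintype.card G : ℂ) / ((n:ℂ) * (n:ℂ) - (n:ℂ)) := by
      intro α hα
      obtain ⟨hαα₀, hαa⟩ := Finset.mem_erase.mp hα
      refine hD α (Finset.mem_erase.mp hαa).1 (fun h => hαα₀ ?_)
      rw [hα₀, ← h, inv_smul_smul]
    rw [ha, hA, Finset.card_empty, Finset.sum_congr rfl herase, Finset.sum_const,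
      Finset.card_erase_of_mem (Finset.mem_erase.mpr ⟨hα₀a, mem_univ α₀⟩),
      Finset.card_erase_of_mem (mem_univ a), Finset.card_univ, nsmul_eq_mul,
      Nat.cast_sub (by omega : 1 ≤ n - 1), Nat.cast_sub (by omega : 1 ≤ n)]
    push_cast
    field_simp
    ring

lemma forward_main (hn : 2 ≤ Fintype.card Ω)
    (h2trans : ∀ a b c d : Ω, a ≠ b → c ≠ d → ∃ g : G, g • a = c ∧ g • b = d)
    (f : G → ℂ)
    (hf : f ∈ Submodule.span ℂ
      {h : G → ℂ | ∃ a b : Ω, h = indicatorVec {g : G | g • a = b}}) :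
    ∀ g : G, ∑ s : G, f s * psiChar G Ω (s * g⁻¹)
      = (Fintype.card G : ℂ) / ((Fintype.card Ω : ℂ) - 1) * f g
        - (Fintype.card G : ℂ) / ((Fintype.card Ω : ℂ) - 1) / (Fintype.card G : ℂ)
          * ∑ s : G, f s := by
  induction hf using Submodule.span_induction with
  | mem h hh =>
    obtain ⟨a, b, rfl⟩ := hh
    exact fun g => gen_identity hn h2trans a b g
  | zero => intro g; simp
  | add x y hx hy ihx ihy =>
    intro g
    simp only [Pi.add_apply]
    rw [Finset.sum_congr rfl (fun s _ => add_mul (x s) (y s) _), Finset.sum_add_distrib,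
      Finset.sum_add_distrib, ihx g, ihy g]
    ring
  | smul c x hx ih =>
    intro g
    simp only [Pi.smul_apply, smul_eq_mul]
    rw [Finset.sum_congr rfl (fun s _ => mul_assoc (c) (x s) _), ← Finset.mul_sum,
      ← Finset.mul_sum, ih g]
    ring

lemma T_mem (f : G → ℂ) (hSf : ∑ s : G, f s = 0) :
    (fun g => ∑ s : G, f s * psiChar G Ω (s * g⁻¹)) ∈ Submodule.span ℂ
      {h : G → ℂ | ∃ a b : Ω, h = indicatorVec {g : G | g • a = b}} := by
  have key : (fun g => ∑ s : G, f s * psiChar G Ω (s * g⁻¹))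
      = ∑ p : Ω × Ω, (∑ s : G, f s * indicatorVec {t : G | t • p.1 = p.2} s) •
          indicatorVec {t : G | t • p.1 = p.2} := by
    funext g
    rw [Finset.sum_apply]
    have hL : ∀ s : G, f s * psiChar G Ω (s * g⁻¹)
        = (∑ a : Ω, f s * if s • a = g • a then (1:ℂ) else 0) - f s := by
      intro s; rw [psiChar_expand, mul_sub, mul_one, Finset.mul_sum]
    rw [Finset.sum_congr rfl (fun s _ => hL s), Finset.sum_sub_distrib, hSf, sub_zero,
      Finset.sum_comm, Fintype.sum_prod_type]
    apply Finset.sum_congr rfl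
    intro a _
    have hterm : ∀ b : Ω, ((∑ s : G, f s * indicatorVec {t : G | t • a = b} s) •
          indicatorVec {t : G | t • a = b}) g
        = if g • a = b then (∑ s : G, f s * if s • a = b then (1:ℂ) else 0) else 0 := by
      intro b
      simp only [Pi.smul_apply, smul_eq_mul, indicatorVec, Set.indicator_apply,
        Set.mem_setOf_eq, mul_ite, mul_one, mul_zero]
    rw [Finset.sum_congr rfl (fun b _ => hterm b), Finset.sum_ite_eq]
    simp
  rw [key]
  exact Submodule.sum_mem _ (fun p _ =>
    Submodule.smul_mem _ _ (Submodule.subset_span ⟨p.1, p.2, rfl⟩))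

lemma ind_union (L X Y : Set G) (hXL : X ⊆ L) (hYL : Y ⊆ Lᶜ) :
    indicatorVec ((L \ X) ∪ Y) = indicatorVec L - (indicatorVec X - indicatorVec Y) := by
  funext g
  simp only [indicatorVec, Set.indicator_apply, Pi.sub_apply, Set.mem_union, Set.mem_diff]
  by_cases hx : g ∈ X
  · have hl := hXL hx
    have hy : g ∉ Y := fun hy => (hYL hy) hl
    simp [hx, hy, hl]
  · by_cases hy : g ∈ Y
    · have hl := hYL hy
      rw [Set.mem_compl_iff] at hl
      simp [hx, hy, hl]
    · by_cases hl : g ∈ L <;> simp [hx, hy, hl]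

lemma finsum_star (X : Set G) (g : G) :
    ∑ᶠ s ∈ X * ({g⁻¹} : Set G), psiChar G Ω s
      = ∑ s : G, indicatorVec X s * psiChar G Ω (s * g⁻¹) := by
  have h1 : X * ({g⁻¹} : Set G) = ↑((X * ({g⁻¹} : Set G)).toFinset) :=
    (Set.coe_toFinset _).symm
  rw [h1, finsum_mem_coe_finset]
  have h2 : ∑ s : G, indicatorVec X s * psiChar G Ω (s * g⁻¹)
      = ∑ s ∈ X.toFinset, psiChar G Ω (s * g⁻¹) := by
    rw [← Finset.sum_subset (Finset.subset_univ X.toFinset)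
      (fun s _ hs => by simp [indicatorVec, Set.indicator_apply, Set.mem_toFinset.not.mp hs])]
    apply Finset.sum_congr rfl
    intro s hs
    simp [indicatorVec, Set.indicator_apply, Set.mem_toFinset.mp hs]
  rw [h2]
  apply Finset.sum_bij' (fun (s : G) (_ : s ∈ (X * ({g⁻¹} : Set G)).toFinset) => s * g)
    (fun (s : G) (_ : s ∈ X.toFinset) => s * g⁻¹)
  · intro t ht
    rw [Set.mem_toFinset] at ht ⊢
    obtain ⟨x, hx, y, hy, rfl⟩ := Set.mem_mul.mp ht
    rw [Set.mem_singleton_iff] at hy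
    subst hy
    simpa using hx
  · intro s hs
    rw [Set.mem_toFinset] at hs ⊢
    exact Set.mul_mem_mul hs rfl
  · intro t _; group
  · intro s _; group
  · intro t ht
    congr 1
    group

lemma sum_ind (X : Set G) : ∑ s : G, indicatorVec X s = (Nat.card X : ℂ) := by
  rw [Nat.card_coe_set_eq, Set.ncard_eq_toFinset_card', Finset.card_eq_sum_ones]
  push_cast
  rw [← Finset.sum_subset (Finset.subset_univ X.toFinset)
    (fun s _ hs => by simp [indicatorVec, Set.indicator_apply, Set.mem_toFinset.not.mp hs])]
  apply Finset.sum_congr rfl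
  intro s hs
  simp [indicatorVec, Set.indicator_apply, Set.mem_toFinset.mp hs]

lemma psiChar_one : psiChar G Ω 1 = (Fintype.card Ω : ℂ) - 1 := by
  unfold psiChar
  congr 2
  have : {α : Ω | (1:G) • α = α} = Set.univ := by ext α; simp
  rw [this, Nat.card_coe_set_eq, Set.ncard_univ, Nat.card_eq_fintype_card]

end Aux

theorem switching_technique_char {G : Type*} [Group G] [Fintype G]
    {Ω : Type*} [Fintype Ω] [MulAction G Ω]
    (h2trans : ∀ a b c d : Ω, a ≠ b → c ≠ d → ∃ g : G, g • a = c ∧ g • b = d)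
    (L X Y : Set G) (hL : IsCLSet G Ω L)
    (hsize : Nat.card X = Nat.card Y)
    (hXL : X ⊆ L) (hYL : Y ⊆ Lᶜ) :
    IsCLSet G Ω ((L \ X) ∪ Y) ↔
      ∀ g : G,
        (∑ᶠ s ∈ X * ({g⁻¹} : Set G), psiChar G Ω s) -
            (∑ᶠ s ∈ Y * ({g⁻¹} : Set G), psiChar G Ω s) =
          ((if g ∈ X then 1 else 0) - (if g ∈ Y then 1 else 0)) *
            (Fintype.card G : ℂ) / psiChar G Ω 1 := by
  classical
  set V := Submodule.span ℂ
    {f : G → ℂ | ∃ a b : Ω, f = indicatorVec {g : G | g • a = b}} with hV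
  set f : G → ℂ := indicatorVec X - indicatorVec Y with hf
  have hSf : ∑ s : G, f s = 0 := by
    simp only [hf, Pi.sub_apply]
    rw [Finset.sum_sub_distrib, sum_ind, sum_ind, hsize, sub_self]
  have hCL : IsCLSet G Ω ((L \ X) ∪ Y) ↔ f ∈ V := by
    unfold IsCLSet
    rw [ind_union L X Y hXL hYL]
    constructor
    · intro h
      have h2 : indicatorVec L - (indicatorVec L - f) ∈ V := Submodule.sub_mem V hL h
      simpa using h2
    · intro h
      exact Submodule.sub_mem V hL h
  have hRHS : ∀ g : G, (∑ᶠ s ∈ X * ({g⁻¹} : Set G), psiChar G Ω s) -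
      (∑ᶠ s ∈ Y * ({g⁻¹} : Set G), psiChar G Ω s)
        = ∑ s : G, f s * psiChar G Ω (s * g⁻¹) := by
    intro g
    rw [finsum_star X g, finsum_star Y g]
    simp only [hf, Pi.sub_apply, sub_mul, Finset.sum_sub_distrib]
  have hind : ∀ g : G,
      ((if g ∈ X then (1:ℂ) else 0) - (if g ∈ Y then 1 else 0)) = f g := by
    intro g
    simp [hf, indicatorVec, Set.indicator_apply]
  rw [hCL]
  have hclean : (∀ g : G,
      (∑ᶠ s ∈ X * ({g⁻¹} : Set G), psiChar G Ω s) -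
          (∑ᶠ s ∈ Y * ({g⁻¹} : Set G), psiChar G Ω s) =
        ((if g ∈ X then 1 else 0) - (if g ∈ Y then 1 else 0)) *
          (Fintype.card G : ℂ) / psiChar G Ω 1)
      ↔ (∀ g : G, ∑ s : G, f s * psiChar G Ω (s * g⁻¹)
          = f g * (Fintype.card G : ℂ) / psiChar G Ω 1) := by
    apply forall_congr'
    intro g
    rw [hRHS g, hind g]
  rw [hclean]
  rcases (by omega : Fintype.card Ω = 0 ∨ Fintype.card Ω = 1 ∨ 2 ≤ Fintype.card Ω) with
    hn0 | hn1 | hn2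
  · -- |Ω| = 0
    haveI hempty : IsEmpty Ω := Fintype.card_eq_zero_iff.mp hn0
    have hM : ((Fintype.card G : ℂ)) ≠ 0 := Nat.cast_ne_zero.mpr Fintype.card_ne_zero
    have hψ : ∀ t : G, psiChar G Ω t = -1 := by
      intro t
      unfold psiChar
      have h1 : {α : Ω | t • α = α} = ∅ := Set.eq_empty_of_isEmpty _
      rw [h1]
      simp
    constructor
    · intro hfV
      have hgen : {h : G → ℂ | ∃ a b : Ω, h = indicatorVec {g : G | g • a = b}} = ∅ := by
        ext h
        simp only [Set.mem_setOf_eq, Set.mem_empty_iff_false, iff_false]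
        rintro ⟨a, _, _⟩
        exact hempty.false a
      rw [hV, hgen, Submodule.span_empty, Submodule.mem_bot] at hfV
      intro g
      simp [hfV]
    · intro h
      have hfg : ∀ g : G, f g = 0 := by
        intro g
        have hg := h g
        rw [psiChar_one, hn0] at hg
        simp only [hψ, mul_neg_one] at hg
        rw [Finset.sum_neg_distrib, hSf, neg_zero] at hg
        have : f g * (Fintype.card G : ℂ) = 0 := by
          have hd : ((0:ℕ):ℂ) - 1 = -1 := by norm_num
          rw [hd, div_neg, div_one] at hg
          linear_combination hg
        rcases mul_eq_zero.mp this with h' | h'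
        · exact h'
        · exact absurd h' hM
      have : f = 0 := funext hfg
      rw [this]
      exact Submodule.zero_mem V
  · -- |Ω| = 1
    haveI hsub : Subsingleton Ω := by
      have : Fintype.card Ω ≤ 1 := by omega
      exact Fintype.card_le_one_iff_subsingleton.mp this
    have hne : Nonempty Ω := Fintype.card_pos_iff.mp (by omega)
    obtain ⟨a₀⟩ := hne
    have hψ : ∀ t : G, psiChar G Ω t = 0 := by
      intro t
      unfold psiChar
      have h1 : {α : Ω | t • α = α} = Set.univ := by
        ext α
        simp only [Set.mem_setOf_eq, Set.mem_univ, iff_true]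
        exact Subsingleton.elim _ _
      rw [h1, Nat.card_coe_set_eq, Set.ncard_univ, Nat.card_eq_fintype_card, hn1]
      norm_num
    constructor
    · intro _ g
      rw [hψ 1, div_zero]
      simp [hψ]
    · intro _
      have hgen : {h : G → ℂ | ∃ a b : Ω, h = indicatorVec {g : G | g • a = b}}
          = {indicatorVec (Set.univ : Set G)} := by
        ext h
        simp only [Set.mem_setOf_eq, Set.mem_singleton_iff]
        constructor
        · rintro ⟨a, b, rfl⟩
          have huniv : {g : G | g • a = b} = Set.univ := by
            ext g; exact iff_of_true (Subsingleton.elim _ _) trivial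
          rw [huniv]
        · rintro rfl
          refine ⟨a₀, a₀, ?_⟩
          have huniv : {g : G | g • a₀ = a₀} = Set.univ := by
            ext g; exact iff_of_true (Subsingleton.elim _ _) trivial
          rw [huniv]
      have hL' := hL
      rw [IsCLSet, ← hV, hV, hgen, Submodule.mem_span_singleton] at hL'
      obtain ⟨c, hc⟩ := hL'
      have hval : ∀ g : G, indicatorVec L g = c := by
        intro g
        rw [← hc]
        simp [indicatorVec, Set.indicator_apply]
      have hXY : X = ∅ ∧ Y = ∅ := by
        by_cases h1 : (1:G) ∈ L
        · have hc1 : c = 1 := by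
            have := hval 1
            simpa [indicatorVec, Set.indicator_apply, h1] using this.symm
          have hLuniv : L = Set.univ := by
            ext g
            simp only [Set.mem_univ, iff_true]
            by_contra hg
            have := hval g
            rw [hc1] at this
            simp [indicatorVec, Set.indicator_apply, hg] at this
          have hY : Y = ∅ := by
            rw [hLuniv, Set.compl_univ, Set.subset_empty_iff] at hYL
            exact hYL
          refine ⟨?_, hY⟩
          have h0 : Nat.card X = 0 := by rw [hsize, hY]; simp
          rwa [Nat.card_coe_set_eq, Set.ncard_eq_zero (Set.toFinite X)] at h0
        · have hc1 : c = 0 := by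
            have := hval 1
            simpa [indicatorVec, Set.indicator_apply, h1] using this.symm
          have hLempty : L = ∅ := by
            ext g
            simp only [Set.mem_empty_iff_false, iff_false]
            intro hg
            have := hval g
            rw [hc1] at this
            simp [indicatorVec, Set.indicator_apply, hg] at this
          have hX : X = ∅ := by
            rw [hLempty, Set.subset_empty_iff] at hXL
            exact hXL
          refine ⟨hX, ?_⟩
          have h0 : Nat.card Y = 0 := by rw [← hsize, hX]; simp
          rwa [Nat.card_coe_set_eq, Set.ncard_eq_zero (Set.toFinite Y)] at h0
      obtain ⟨hX, hY⟩ := hXY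
      have hf0 : f = 0 := by
        funext g
        simp [hf, hX, hY, indicatorVec]
      rw [hf0]
      exact Submodule.zero_mem V
  · -- |Ω| ≥ 2
    have hM : ((Fintype.card G : ℂ)) ≠ 0 := Nat.cast_ne_zero.mpr Fintype.card_ne_zero
    have hN1 : ((Fintype.card Ω : ℂ)) - 1 ≠ 0 := sub_ne_zero.mpr (by
      intro h
      have : Fintype.card Ω = 1 := by exact_mod_cast h
      omega)
    rw [psiChar_one]
    constructor
    · intro hfV g
      rw [forward_main hn2 h2trans f hfV g, hSf, mul_zero, sub_zero]
      ring
    · intro h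
      have hkey : f = (((Fintype.card Ω : ℂ) - 1) / (Fintype.card G : ℂ)) •
          (fun g => ∑ s : G, f s * psiChar G Ω (s * g⁻¹)) := by
        funext g
        simp only [Pi.smul_apply, smul_eq_mul]
        rw [h g]
        field_simp
      rw [hkey]
      exact Submodule.smul_mem V _ (T_mem f hSf)
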